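/- arXiv:2205.04953 — 2 statements merged into one kernel-verified Lean document; each statement's English description precedes it below -/
import Mathlib

section
/- For every finite graph G, χ_f(G)·α(G) ≥ |V(G)|, where α(G) is the independence number and χ_f(G) the fractional chromatic number. Moreover, equality holds if G is vertex-transitive. -/
open SimpleGraph

/-- The strong product of two simple graphs. -/
def strongProd {α β : Type*} (G : SimpleGraph α) (H : SimpleGraph β) :
    SimpleGraph (α × β) where
  Adj x y := x ≠ y ∧ (x.1 = y.1 ∨ G.Adj x.1 y.1) ∧ (x.2 = y.2 ∨ H.Adj x.2 y.2)
  symm := ⟨fun x y => by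
    rintro ⟨h1, h2, h3⟩
    exact ⟨h1.symm, h2.imp Eq.symm (fun h => h.symm), h3.imp Eq.symm (fun h => h.symm)⟩⟩
  loopless := ⟨fun x => by simp⟩

/-- The strong product of a family of simple graphs. -/
def strongProdPi {d : ℕ} {V : Fin d → Type*} (G : ∀ i, SimpleGraph (V i)) :
    SimpleGraph (∀ i, V i) where
  Adj x y := x ≠ y ∧ ∀ i, x i = y i ∨ (G i).Adj (x i) (y i)
  symm := ⟨fun x y => fun ⟨h1, h2⟩ => ⟨h1.symm, fun i => (h2 i).imp Eq.symm (fun h => h.symm)⟩⟩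
  loopless := ⟨fun x => by simp⟩

/-- Every connected component of the subgraph of `G` induced on `S` has at most `c`
vertices. -/
def ClusterBound {α : Type*} (G : SimpleGraph α) (S : Set α) (c : ℕ) : Prop :=
  ∀ v : S, ((G.induce S).connectedComponentMk v).supp.ncard ≤ c

/-- `G` has a `k`-colouring with clustering `c`. -/
def HasClusteredColoring {α : Type*} (G : SimpleGraph α) (k c : ℕ) : Prop :=
  ∃ f : α → Fin k, ∀ i : Fin k, ClusterBound G {v | f v = i} c

/-- `f` is a `(p:q)`-colouring: each vertex gets a `q`-element subset of `Fin p`. -/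
def IsPQColoring {α : Type*} (p q : ℕ) (f : α → Finset (Fin p)) : Prop :=
  ∀ v, (f v).card = q

/-- `f` is a proper `(p:q)`-colouring of `G`. -/
def IsProperPQColoring {α : Type*} (G : SimpleGraph α) (p q : ℕ)
    (f : α → Finset (Fin p)) : Prop :=
  IsPQColoring p q f ∧ ∀ ⦃x y⦄, G.Adj x y → Disjoint (f x) (f y)

/-- The set-colouring `f` has clustering `c`: for each colour, each monochromatic
component has at most `c` vertices. -/
def PQClusterBound {α : Type*} (G : SimpleGraph α) {p : ℕ}
    (f : α → Finset (Fin p)) (c : ℕ) : Prop :=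
  ∀ i : Fin p, ClusterBound G {v | i ∈ f v} c

/-- `G` has a `(p:q)`-colouring with clustering `c`. -/
def HasPQClusteredColoring {α : Type*} (G : SimpleGraph α) (p q c : ℕ) : Prop :=
  ∃ f : α → Finset (Fin p), IsPQColoring p q f ∧ PQClusterBound G f c

/-- `ord` is a consistent `(p:q)`-colouring of `G` (each vertex's `q` colours are ordered,
with the `i`-th colour of `x` different from the `j`-th colour of `y` for every edge `xy`
and all distinct `i, j`). -/
def IsConsistentPQColoring {α : Type*} (G : SimpleGraph α) (p q : ℕ)
    (ord : α → Fin q → Fin p) : Prop :=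
  (∀ v, Function.Injective (ord v)) ∧
    ∀ ⦃x y⦄, G.Adj x y → ∀ i j : Fin q, i ≠ j → ord x i ≠ ord y j

/-- The colour set of a vertex in an ordered colouring. -/
def ordColors {α : Type*} {p q : ℕ} (ord : α → Fin q → Fin p) (v : α) : Finset (Fin p) :=
  Finset.image (ord v) Finset.univ

/-- `G` has a consistent `(p:q)`-colouring with clustering `c`. -/
def HasConsistentClusteredColoring {α : Type*} (G : SimpleGraph α) (p q c : ℕ) : Prop :=
  ∃ ord : α → Fin q → Fin p, IsConsistentPQColoring G p q ord ∧
    PQClusterBound G (ordColors ord) c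

/-- The fractional chromatic number of `G`: the infimum of `p/q` over proper
`(p:q)`-colourings of `G`. -/
noncomputable def fracChrom {α : Type*} (G : SimpleGraph α) : ℝ :=
  sInf {t : ℝ | ∃ p q : ℕ, 0 < q ∧
    (∃ f : α → Finset (Fin p), IsProperPQColoring G p q f) ∧ t = (p : ℝ) / q}

/-- The independence number of `G`. -/
noncomputable def indepNum {α : Type*} (G : SimpleGraph α) : ℕ :=
  sSup {n | ∃ s : Finset α, (∀ x ∈ s, ∀ y ∈ s, ¬ G.Adj x y) ∧ s.card = n}


section StmtFiveHelpers

open Finset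

variable {α : Type*} [Fintype α] (G : SimpleGraph α)

lemma stmt5_indep_card_le (s : Finset α)
    (hs : ∀ x ∈ s, ∀ y ∈ s, ¬ G.Adj x y) : s.card ≤ _root_.indepNum G :=
  le_csSup ⟨Fintype.card α, by rintro n ⟨t, _, rfl⟩; exact t.card_le_univ⟩ ⟨s, hs, rfl⟩

lemma stmt5_exists_indep :
    ∃ s : Finset α, (∀ x ∈ s, ∀ y ∈ s, ¬ G.Adj x y) ∧ s.card = _root_.indepNum G := by
  have h := Nat.sSup_mem
    (s := {n | ∃ s : Finset α, (∀ x ∈ s, ∀ y ∈ s, ¬ G.Adj x y) ∧ s.card = n})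
    ⟨0, ∅, by simp, by simp⟩
    ⟨Fintype.card α, by rintro n ⟨t, _, rfl⟩; exact t.card_le_univ⟩
  exact h

lemma stmt5_indep_pos (hn : 0 < Fintype.card α) : 0 < _root_.indepNum G := by
  obtain ⟨v⟩ := Fintype.card_pos_iff.1 hn
  have h := stmt5_indep_card_le G {v} (by
    intro x hx y hy
    simp only [Finset.mem_singleton] at hx hy
    rw [hx, hy]
    exact G.loopless.irrefl v)
  rw [Finset.card_singleton] at h
  omega

lemma stmt5_key_count {p q : ℕ} {f : α → Finset (Fin p)}
    (hf : IsProperPQColoring G p q f) :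
    q * Fintype.card α ≤ p * _root_.indepNum G := by
  classical
  have h1 : ∑ v : α, (f v).card = q * Fintype.card α := by
    have hc : ∀ v, (f v).card = q := hf.1
    simp [hc, Finset.sum_const, Finset.card_univ, mul_comm]
  have h2 : ∑ v : α, (f v).card
      = ∑ i : Fin p, (univ.filter fun v => i ∈ f v).card := by
    have hv : ∀ v : α, (f v).card = ∑ i : Fin p, if i ∈ f v then 1 else 0 := fun v => by
      rw [← Finset.card_filter, Finset.filter_univ_mem]
    simp_rw [hv, Finset.card_filter]
    exact Finset.sum_comm
  have h3 : ∀ i : Fin p, (univ.filter fun v => i ∈ f v).card ≤ _root_.indepNum G := by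
    intro i
    apply stmt5_indep_card_le G
    intro x hx y hy hadj
    have hd := hf.2 hadj
    simp only [Finset.mem_filter] at hx hy
    exact Finset.disjoint_left.1 hd hx.2 hy.2
  calc q * Fintype.card α = ∑ v : α, (f v).card := h1.symm
    _ = _ := h2
    _ ≤ ∑ _i : Fin p, _root_.indepNum G := Finset.sum_le_sum fun i _ => h3 i
    _ = p * _root_.indepNum G := by simp [mul_comm]

lemma stmt5_setS_nonempty :
    {t : ℝ | ∃ p q : ℕ, 0 < q ∧
      (∃ f : α → Finset (Fin p), IsProperPQColoring G p q f) ∧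
      t = (p : ℝ) / q}.Nonempty := by
  classical
  refine ⟨Fintype.card α, Fintype.card α, 1, one_pos,
    ⟨fun v => {Fintype.equivFin α v}, fun v => by simp, ?_⟩, by norm_num⟩
  intro x y hxy
  exact Finset.disjoint_singleton.2 fun h => hxy.ne ((Fintype.equivFin α).injective h)

lemma stmt5_setS_bdd :
    BddBelow {t : ℝ | ∃ p q : ℕ, 0 < q ∧
      (∃ f : α → Finset (Fin p), IsProperPQColoring G p q f) ∧
      t = (p : ℝ) / q} :=
  ⟨0, by rintro t ⟨p, q, hq, _, rfl⟩; positivity⟩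

lemma stmt5_frac_lb (hn : 0 < Fintype.card α) :
    (Fintype.card α : ℝ) / _root_.indepNum G ≤ fracChrom G := by
  classical
  have hα : 0 < _root_.indepNum G := stmt5_indep_pos G hn
  apply le_csInf (stmt5_setS_nonempty G)
  rintro t ⟨p, q, hq, ⟨f, hf⟩, rfl⟩
  have key := stmt5_key_count G hf
  rw [div_le_div_iff₀ (by exact_mod_cast hα) (by exact_mod_cast hq)]
  have hkey : (q : ℝ) * Fintype.card α ≤ p * _root_.indepNum G := by exact_mod_cast key
  linarith

lemma stmt5_frac_ub (hn : 0 < Fintype.card α)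
    (ht : ∀ u v : α, ∃ e : G ≃g G, e u = v) :
    fracChrom G ≤ (Fintype.card α : ℝ) / _root_.indepNum G := by
  classical
  have hα : 0 < _root_.indepNum G := stmt5_indep_pos G hn
  obtain ⟨A, hA, hAcard⟩ := stmt5_exists_indep G
  obtain ⟨v₀⟩ := Fintype.card_pos_iff.1 hn
  haveI : Fintype (G ≃g G) :=
    Fintype.ofInjective (fun g => (g : α ≃ α)) fun a b h => RelIso.toEquiv_injective h
  set N : α → α → ℕ := fun a v => (univ.filter fun g : G ≃g G => g a = v).card with hNdef
  have hNconst : ∀ a v b w, N a v = N b w := by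
    intro a v b w
    obtain ⟨h₁, hh₁⟩ := ht b a
    obtain ⟨h₂, hh₂⟩ := ht v w
    apply Finset.card_nbij' (fun g => (h₁.trans g).trans h₂)
      (fun g => (h₁.symm.trans g).trans h₂.symm)
    · intro g hg
      simp only [Finset.mem_coe, Finset.mem_filter, Finset.mem_univ, true_and] at hg ⊢
      simp [RelIso.trans_apply, hh₁, hg, hh₂]
    · intro g hg
      simp only [Finset.mem_coe, Finset.mem_filter, Finset.mem_univ, true_and] at hg ⊢
      have h1 : h₁.symm a = b := by rw [← hh₁]; exact h₁.symm_apply_apply b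
      have h2 : h₂.symm w = v := by rw [← hh₂]; exact h₂.symm_apply_apply v
      simp [RelIso.trans_apply, h1, hg, h2]
    · intro g hg
      ext x
      simp [RelIso.trans_apply]
    · intro g hg
      ext x
      simp [RelIso.trans_apply]
  set Nc : ℕ := N v₀ v₀ with hNcdef
  have hsum : ∀ a : α, Fintype.card (G ≃g G) = ∑ v : α, N a v := by
    intro a
    rw [← Finset.card_univ]
    exact Finset.card_eq_sum_card_fiberwise (f := fun g : G ≃g G => g a)
      (t := univ) fun _ _ => mem_univ _
  have hΓ : Fintype.card (G ≃g G) = Fintype.card α * Nc := by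
    rw [hsum v₀, Finset.sum_congr rfl fun v _ => hNconst v₀ v v₀ v₀]
    simp [mul_comm, hNcdef]
  have hNc_pos : 0 < Nc := by
    rcases Nat.eq_zero_or_pos Nc with h | h
    · exfalso
      haveI : Nonempty (G ≃g G) := ⟨RelIso.refl _⟩
      have hpos := Fintype.card_pos (α := G ≃g G)
      rw [hΓ, h, mul_zero] at hpos
      exact absurd hpos (lt_irrefl 0)
    · exact h
  set eΓ := Fintype.equivFin (G ≃g G) with heΓ
  set p := Fintype.card (G ≃g G) with hp
  set f : α → Finset (Fin p) :=
    fun v => (univ.filter fun g : G ≃g G => g.symm v ∈ A).image eΓ with hfdef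
  have hfcard : ∀ v, (f v).card = _root_.indepNum G * Nc := by
    intro v
    rw [hfdef]
    simp only
    rw [Finset.card_image_of_injective _ eΓ.injective]
    rw [Finset.card_eq_sum_card_fiberwise (f := fun g : G ≃g G => g.symm v)
      (s := univ.filter fun g : G ≃g G => g.symm v ∈ A)
      (t := A) (fun g hg => (Finset.mem_filter.1 (Finset.mem_coe.1 hg)).2)]
    have hfib : ∀ a ∈ A,
        ((univ.filter fun g : G ≃g G => g.symm v ∈ A).filter
          fun g => g.symm v = a).card = Nc := by
      intro a ha
      rw [Finset.filter_filter]
      have heqf : ((univ : Finset (G ≃g G)).filter fun g => g.symm v ∈ A ∧ g.symm v = a)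
          = univ.filter fun g : G ≃g G => g a = v := by
        apply Finset.filter_congr
        intro g _
        constructor
        · rintro ⟨_, hga⟩
          rw [← hga]
          exact g.apply_symm_apply v
        · intro hgv
          have : g.symm v = a := by rw [← hgv]; exact g.symm_apply_apply a
          exact ⟨this ▸ ha, this⟩
      rw [heqf]
      exact hNconst a v v₀ v₀
    rw [Finset.sum_congr rfl hfib, Finset.sum_const, smul_eq_mul, hAcard]
  have hproper : IsProperPQColoring G p (_root_.indepNum G * Nc) f := by
    refine ⟨hfcard, ?_⟩
    intro x y hxy
    rw [Finset.disjoint_left]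
    intro i hix hiy
    rw [hfdef] at hix hiy
    simp only [Finset.mem_image, Finset.mem_filter, Finset.mem_univ, true_and] at hix hiy
    obtain ⟨g₁, hg₁, hi₁⟩ := hix
    obtain ⟨g₂, hg₂, hi₂⟩ := hiy
    have hgg : g₁ = g₂ := eΓ.injective (hi₁.trans hi₂.symm)
    subst hgg
    exact hA _ hg₁ _ hg₂ (g₁.symm.map_rel_iff.2 hxy)
  have hq : 0 < _root_.indepNum G * Nc := Nat.mul_pos hα hNc_pos
  have hmem : ((p : ℝ) / (_root_.indepNum G * Nc : ℕ)) ∈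
      {t : ℝ | ∃ p q : ℕ, 0 < q ∧
        (∃ f : α → Finset (Fin p), IsProperPQColoring G p q f) ∧
        t = (p : ℝ) / q} :=
    ⟨p, _root_.indepNum G * Nc, hq, ⟨f, hproper⟩, rfl⟩
  have hle := csInf_le (stmt5_setS_bdd G) hmem
  refine hle.trans (le_of_eq ?_)
  rw [hΓ]
  push_cast
  rw [mul_div_mul_right _ _ (by exact_mod_cast hNc_pos.ne' : (Nc : ℝ) ≠ 0)]

end StmtFiveHelpers

theorem stmt5 {α : Type*} [Fintype α] (G : SimpleGraph α) :
    (Fintype.card α : ℝ) ≤ fracChrom G * _root_.indepNum G ∧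
      ((∀ u v : α, ∃ e : G ≃g G, e u = v) →
        fracChrom G * _root_.indepNum G = Fintype.card α) := by
  classical
  rcases Nat.eq_zero_or_pos (Fintype.card α) with hn | hn
  · have hα0 : _root_.indepNum G = 0 := by
      haveI : IsEmpty α := Fintype.card_eq_zero_iff.1 hn
      refine le_antisymm ?_ (Nat.zero_le _)
      show sSup {n | ∃ s : Finset α, (∀ x ∈ s, ∀ y ∈ s, ¬ G.Adj x y) ∧ s.card = n} ≤ 0
      refine csSup_le ⟨0, ⟨∅, by simp, by simp⟩⟩ ?_
      rintro n ⟨s, _, rfl⟩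
      have := s.card_le_univ
      simpa [hn] using this
    refine ⟨by simp [hn, hα0], fun _ => by simp [hn, hα0]⟩
  · have hα : 0 < _root_.indepNum G := stmt5_indep_pos G hn
    have hαR : (0 : ℝ) < _root_.indepNum G := by exact_mod_cast hα
    have hlb : (Fintype.card α : ℝ) ≤ fracChrom G * _root_.indepNum G := by
      have h := mul_le_mul_of_nonneg_right (stmt5_frac_lb G hn) hαR.le
      rwa [div_mul_cancel₀ _ hαR.ne'] at h
    refine ⟨hlb, fun ht => ?_⟩
    have heq : fracChrom G = (Fintype.card α : ℝ) / _root_.indepNum G :=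
      le_antisymm (stmt5_frac_ub G hn ht) (stmt5_frac_lb G hn)
    rw [heq, div_mul_cancel₀ _ hαR.ne']
end

section
/- If a graph G has a consistent (p:q)-colouring with clustering c₁ and a graph H has a (q:r)-colouring with clustering c₂, then G ⊠ H has a (p:r)-colouring with clustering c₁·c₂. -/
open SimpleGraph

theorem stmt8 {α β : Type*} (G : SimpleGraph α) (H : SimpleGraph β) (p q r c₁ c₂ : ℕ)
    (hG : HasConsistentClusteredColoring G p q c₁)
    (hH : HasPQClusteredColoring H q r c₂) :
    HasPQClusteredColoring (strongProd G H) p r (c₁ * c₂) := by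
  classical
  obtain ⟨ord, ⟨hinj, hcons⟩, hGc⟩ := hG
  obtain ⟨g, hgcard, hHc⟩ := hH
  refine ⟨fun w => (g w.2).image (ord w.1), ?_, ?_⟩
  · intro w
    rw [Finset.card_image_of_injective _ (hinj w.1), hgcard]
  · intro i
    set S : Set (α × β) := {w | i ∈ (fun w : α × β => (g w.2).image (ord w.1)) w} with hS
    intro v
    have hv : i ∈ (g v.1.2).image (ord v.1.1) := v.2
    obtain ⟨j₀, hj₀g, hj₀⟩ := Finset.mem_image.mp hv
    set classG : Set α := {a | i ∈ ordColors ord a} with hclassG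
    set classH : Set β := {b | j₀ ∈ g b} with hclassH
    have hmemG : ∀ a : α, (∃ j, ord a j = i) ↔ a ∈ classG := by
      intro a
      simp [hclassG, ordColors, Finset.mem_image]
    have hx₀ : v.1.1 ∈ classG := (hmemG _).mp ⟨j₀, hj₀⟩
    have hy₀ : v.1.2 ∈ classH := hj₀g
    -- membership of a pair in S
    have hmemS : ∀ x y, (∃ j, j ∈ g y ∧ ord x j = i) ↔ (x, y) ∈ S := by
      intro x y
      simp [hS, Finset.mem_image]
    -- the index is constant along edges
    have hstep : ∀ a b : S, ((strongProd G H).induce S).Adj a b →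
        ord a.1.1 j₀ = i → ord b.1.1 j₀ = i ∧ j₀ ∈ g b.1.2 := by
      rintro a b hab ha
      obtain ⟨j', hj'g, hj'⟩ := (hmemS b.1.1 b.1.2).mpr (by exact b.2)
      obtain ⟨hne, hG1, hH1⟩ : (strongProd G H).Adj a.1 b.1 := hab
      have hjj : j' = j₀ := by
        rcases hG1 with heq | hadj
        · exact hinj b.1.1 (by rw [hj', ← heq, ha])
        · by_contra hne'
          exact hcons hadj j₀ j' (Ne.symm hne') (by rw [ha, hj'])
      rw [hjj] at hj' hj'g
      exact ⟨hj', hj'g⟩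
    set SGraw := ((G.induce classG).connectedComponentMk ⟨v.1.1, hx₀⟩).supp with hSGraw
    set SHraw := ((H.induce classH).connectedComponentMk ⟨v.1.2, hy₀⟩).supp with hSHraw
    set SG : Set α := Subtype.val '' SGraw with hSG
    set SH : Set β := Subtype.val '' SHraw with hSH
    have hSGstep : ∀ a b : α, a ∈ SG → b ∈ classG → (a = b ∨ G.Adj a b) → b ∈ SG := by
      rintro a b ⟨⟨a, hac⟩, hmem, rfl⟩ hbc hab
      rw [SimpleGraph.ConnectedComponent.mem_supp_iff] at hmem
      refine ⟨⟨b, hbc⟩, ?_, rfl⟩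
      rw [SimpleGraph.ConnectedComponent.mem_supp_iff, ← hmem,
        SimpleGraph.ConnectedComponent.eq]
      rcases hab with rfl | hadj
      · exact SimpleGraph.Reachable.refl _
      · exact SimpleGraph.Adj.reachable (by exact hadj.symm)
    have hSHstep : ∀ a b : β, a ∈ SH → b ∈ classH → (a = b ∨ H.Adj a b) → b ∈ SH := by
      rintro a b ⟨⟨a, hac⟩, hmem, rfl⟩ hbc hab
      rw [SimpleGraph.ConnectedComponent.mem_supp_iff] at hmem
      refine ⟨⟨b, hbc⟩, ?_, rfl⟩
      rw [SimpleGraph.ConnectedComponent.mem_supp_iff, ← hmem,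
        SimpleGraph.ConnectedComponent.eq]
      rcases hab with rfl | hadj
      · exact SimpleGraph.Reachable.refl _
      · exact SimpleGraph.Adj.reachable (by exact hadj.symm)
    -- main invariant along walks in the strong product
    have key : ∀ (a b : S) (w : ((strongProd G H).induce S).Walk a b),
        (ord a.1.1 j₀ = i ∧ a.1.1 ∈ SG ∧ a.1.2 ∈ SH) →
        (ord b.1.1 j₀ = i ∧ b.1.1 ∈ SG ∧ b.1.2 ∈ SH) := by
      intro a b w
      induction w with
      | nil => exact id
      | cons hadj w ih =>
        rename_i u x y
        intro ⟨h1, h2, h3⟩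
        refine ih ?_
        obtain ⟨h1', hg'⟩ := hstep u x hadj h1
        obtain ⟨hne, hG1, hH1⟩ : (strongProd G H).Adj u.1 x.1 := hadj
        refine ⟨h1', ?_, ?_⟩
        · exact hSGstep _ _ h2 ((hmemG _).mp ⟨j₀, h1'⟩) hG1
        · exact hSHstep _ _ h3 hg' hH1
    have hbase : ord v.1.1 j₀ = i ∧ v.1.1 ∈ SG ∧ v.1.2 ∈ SH := by
      refine ⟨hj₀, ⟨⟨v.1.1, hx₀⟩, ?_, rfl⟩, ⟨⟨v.1.2, hy₀⟩, ?_, rfl⟩⟩ <;>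
        rw [SimpleGraph.ConnectedComponent.mem_supp_iff]
    set C := ((strongProd G H).induce S).connectedComponentMk v with hC
    have hsuppkey : ∀ b : S, b ∈ C.supp → ord b.1.1 j₀ = i ∧ b.1.1 ∈ SG ∧ b.1.2 ∈ SH := by
      intro b hb
      rw [SimpleGraph.ConnectedComponent.mem_supp_iff, hC,
        SimpleGraph.ConnectedComponent.eq] at hb
      obtain ⟨w⟩ := hb.symm
      exact key v b w hbase
    have hsub : Subtype.val '' C.supp ⊆ SG ×ˢ SH := by
      rintro w ⟨b, hb, rfl⟩
      obtain ⟨_, h2, h3⟩ := hsuppkey b hb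
      exact ⟨h2, h3⟩
    -- reverse inclusion for G side
    have hGrev : ∀ (a b : classG) (w : (G.induce classG).Walk a b),
        (∃ (ha : ((a : α), v.1.2) ∈ S), (⟨(a, v.1.2), ha⟩ : S) ∈ C.supp) →
        (∃ (hb : ((b : α), v.1.2) ∈ S), (⟨(b, v.1.2), hb⟩ : S) ∈ C.supp) := by
      intro a b w
      induction w with
      | nil => exact id
      | cons hadj w ih =>
        rename_i u x y
        intro ⟨ha, hmem⟩
        refine ih ?_
        have hordu : ord u.1 j₀ = i := (hsuppkey _ hmem).1
        obtain ⟨j', hj'⟩ := (hmemG x.1).mpr x.2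
        have hadj' : G.Adj u.1 x.1 := hadj
        have hjj : j' = j₀ := by
          by_contra hne'
          exact hcons hadj' j₀ j' (Ne.symm hne') (by rw [hordu, hj'])
        rw [hjj] at hj'
        have hxS : ((x : α), v.1.2) ∈ S := (hmemS _ _).mp ⟨j₀, hj₀g, hj'⟩
        refine ⟨hxS, ?_⟩
        rw [SimpleGraph.ConnectedComponent.mem_supp_iff] at hmem ⊢
        rw [← hmem, SimpleGraph.ConnectedComponent.eq]
        refine SimpleGraph.Adj.reachable ?_ |>.symm
        show (strongProd G H).Adj (u.1, v.1.2) (x.1, v.1.2)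
        exact ⟨fun h => hadj'.ne (congrArg Prod.fst h), Or.inr hadj', Or.inl rfl⟩
    have hHrev : ∀ (a b : classH) (w : (H.induce classH).Walk a b),
        (∃ (ha : (v.1.1, (a : β)) ∈ S), (⟨(v.1.1, a), ha⟩ : S) ∈ C.supp) →
        (∃ (hb : (v.1.1, (b : β)) ∈ S), (⟨(v.1.1, b), hb⟩ : S) ∈ C.supp) := by
      intro a b w
      induction w with
      | nil => exact id
      | cons hadj w ih =>
        rename_i u x y
        intro ⟨ha, hmem⟩
        refine ih ?_
        have hadj' : H.Adj u.1 x.1 := hadj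
        have hxS : (v.1.1, (x : β)) ∈ S := (hmemS _ _).mp ⟨j₀, x.2, hj₀⟩
        refine ⟨hxS, ?_⟩
        rw [SimpleGraph.ConnectedComponent.mem_supp_iff] at hmem ⊢
        rw [← hmem, SimpleGraph.ConnectedComponent.eq]
        refine SimpleGraph.Adj.reachable ?_ |>.symm
        show (strongProd G H).Adj (v.1.1, u.1) (v.1.1, x.1)
        exact ⟨fun h => hadj'.ne (congrArg Prod.snd h), Or.inl rfl, Or.inr hadj'⟩
    have hvC : v ∈ C.supp := by rw [SimpleGraph.ConnectedComponent.mem_supp_iff]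
    have hGrevsub : SG ⊆ Prod.fst '' (Subtype.val '' C.supp) := by
      rintro x ⟨xc, hxc, rfl⟩
      rw [SimpleGraph.ConnectedComponent.mem_supp_iff, SimpleGraph.ConnectedComponent.eq] at hxc
      obtain ⟨w⟩ := hxc.symm
      obtain ⟨hb, hmem⟩ := hGrev ⟨v.1.1, hx₀⟩ xc w ⟨v.2, hvC⟩
      exact ⟨((xc : α), v.1.2), ⟨_, hmem, rfl⟩, rfl⟩
    have hHrevsub : SH ⊆ Prod.snd '' (Subtype.val '' C.supp) := by
      rintro y ⟨yc, hyc, rfl⟩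
      rw [SimpleGraph.ConnectedComponent.mem_supp_iff, SimpleGraph.ConnectedComponent.eq] at hyc
      obtain ⟨w⟩ := hyc.symm
      obtain ⟨hb, hmem⟩ := hHrev ⟨v.1.2, hy₀⟩ yc w ⟨v.2, hvC⟩
      exact ⟨(v.1.1, (yc : β)), ⟨_, hmem, rfl⟩, rfl⟩
    by_cases hfin : C.supp.Finite
    · have hvalfin : (Subtype.val '' C.supp).Finite := hfin.image _
      have hSGfin : SG.Finite := (hvalfin.image Prod.fst).subset hGrevsub
      have hSHfin : SH.Finite := (hvalfin.image Prod.snd).subset hHrevsub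
      have hprod : (SG ×ˢ SH).ncard = SG.ncard * SH.ncard := by
        rw [← Nat.card_coe_set_eq, ← Nat.card_coe_set_eq, ← Nat.card_coe_set_eq,
          Nat.card_congr (Equiv.Set.prod SG SH), Nat.card_prod]
      have h1 : C.supp.ncard = (Subtype.val '' C.supp).ncard :=
        (Set.ncard_image_of_injective _ Subtype.val_injective).symm
      have h2 : SG.ncard = SGraw.ncard := Set.ncard_image_of_injective _ Subtype.val_injective
      have h3 : SH.ncard = SHraw.ncard := Set.ncard_image_of_injective _ Subtype.val_injective
      calc C.supp.ncard = (Subtype.val '' C.supp).ncard := h1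
        _ ≤ (SG ×ˢ SH).ncard := Set.ncard_le_ncard hsub (hSGfin.prod hSHfin)
        _ = SG.ncard * SH.ncard := hprod
        _ ≤ c₁ * c₂ := by
            refine Nat.mul_le_mul ?_ ?_
            · rw [h2]; exact hGc i ⟨v.1.1, hx₀⟩
            · rw [h3]; exact hHc j₀ ⟨v.1.2, hy₀⟩
    · rw [Set.Infinite.ncard hfin]
      exact Nat.zero_le _
end
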